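/- For x ∈ (0,1), ∫₀ˣ (log t)²/(1−t²) dt = Li₃(x) − Li₃(−x) − (log x)·(Li₂(x) − Li₂(−x)) + (1/2)(log x)²·log((1+x)/(1−x)). -/

import Mathlib

open MeasureTheory Real Set Filter Topology

noncomputable def Li (s : ℕ) (w : ℝ) : ℝ := ∑' n : ℕ, w ^ (n + 1) / ((n:ℝ) + 1) ^ s

private lemma summable_aux {y : ℝ} (hy : |y| < 1) (s : ℕ) :
    Summable (fun n : ℕ => y ^ (n + 1) / ((n:ℝ) + 1) ^ s) := by
  refine Summable.of_norm_bounded (summable_geometric_of_lt_one (abs_nonneg y) hy) (fun n => ?_)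
  have h1 : (1:ℝ) ≤ ((n:ℝ) + 1) ^ s := one_le_pow₀ (le_add_of_nonneg_left (Nat.cast_nonneg n))
  rw [norm_div, norm_pow, Real.norm_eq_abs, Real.norm_eq_abs,
    abs_of_pos (by positivity : (0:ℝ) < ((n:ℝ)+1)^s)]
  calc |y| ^ (n+1) / ((n:ℝ)+1)^s ≤ |y|^(n+1) := div_le_self (by positivity) h1
    _ ≤ |y|^n := pow_le_pow_of_le_one (abs_nonneg y) hy.le (Nat.le_succ n)

noncomputable def G (n : ℕ) (t : ℝ) : ℝ :=
  t^(n+1) * ((Real.log t)^2/((n:ℝ)+1) - 2*Real.log t/((n:ℝ)+1)^2 + 2/((n:ℝ)+1)^3)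

private lemma hasDerivAt_G (n : ℕ) {t : ℝ} (ht : 0 < t) :
    HasDerivAt (G n) (t^n * (Real.log t)^2) t := by
  have hlog := Real.hasDerivAt_log (ne_of_gt ht)
  have hpow : HasDerivAt (fun s : ℝ => s ^ (n+1)) (((n:ℝ)+1) * t^n) t := by
    simpa using hasDerivAt_pow (n+1) t
  have h2 : HasDerivAt (fun s : ℝ => (Real.log s)^2) (2 * Real.log t * t⁻¹) t := by
    simpa using hlog.fun_pow 2
  have hinner : HasDerivAt
      (fun s => (Real.log s)^2/((n:ℝ)+1) - 2*Real.log s/((n:ℝ)+1)^2 + 2/((n:ℝ)+1)^3)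
      ((2 * Real.log t * t⁻¹)/((n:ℝ)+1) - (2 * t⁻¹)/((n:ℝ)+1)^2) t :=
    ((h2.div_const _).sub ((hlog.const_mul 2).div_const _)).add_const _
  have htot : HasDerivAt
      (fun s : ℝ => s^(n+1) * ((Real.log s)^2/((n:ℝ)+1) - 2*Real.log s/((n:ℝ)+1)^2 + 2/((n:ℝ)+1)^3))
      (((n:ℝ)+1) * t^n * ((Real.log t)^2/((n:ℝ)+1) - 2*Real.log t/((n:ℝ)+1)^2 + 2/((n:ℝ)+1)^3)
        + t^(n+1) * ((2 * Real.log t * t⁻¹)/((n:ℝ)+1) - (2 * t⁻¹)/((n:ℝ)+1)^2)) t :=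
    hpow.fun_mul hinner
  have hc : ((n:ℝ)+1) ≠ 0 := by positivity
  have ht' : t ≠ 0 := ne_of_gt ht
  have hGeq : G n = fun t : ℝ =>
      t^(n+1) * ((Real.log t)^2/((n:ℝ)+1) - 2*Real.log t/((n:ℝ)+1)^2 + 2/((n:ℝ)+1)^3) := rfl
  rw [hGeq]
  convert htot using 1
  field_simp
  ring

private lemma G_nonneg (n : ℕ) {t : ℝ} (h0 : 0 < t) (h1 : t ≤ 1) : 0 ≤ G n t := by
  have hl : Real.log t ≤ 0 := Real.log_nonpos h0.le h1
  have h1' : (0:ℝ) ≤ (Real.log t)^2/((n:ℝ)+1) := by positivity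
  have h2' : 2*Real.log t/((n:ℝ)+1)^2 ≤ 0 :=
    div_nonpos_iff.mpr (Or.inr ⟨by linarith, by positivity⟩)
  have h3' : (0:ℝ) ≤ 2/((n:ℝ)+1)^3 := by positivity
  have := pow_pos h0 (n+1)
  have : (0:ℝ) ≤ (Real.log t)^2/((n:ℝ)+1) - 2*Real.log t/((n:ℝ)+1)^2 + 2/((n:ℝ)+1)^3 := by
    linarith
  exact mul_nonneg (by positivity) this

private lemma tendsto_G_zero (n : ℕ) : Tendsto (G n) (𝓝[>] (0:ℝ)) (𝓝 0) := by
  have h1 : Tendsto (fun t:ℝ => Real.log t * t ^ (((n:ℝ)+1)/2)) (𝓝[>] (0:ℝ)) (𝓝 0) :=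
    tendsto_log_mul_rpow_nhdsGT_zero (by positivity)
  have hsq : Tendsto (fun t:ℝ => (Real.log t * t ^ (((n:ℝ)+1)/2))^2) (𝓝[>] (0:ℝ)) (𝓝 0) := by
    simpa using h1.pow 2
  have h2 : Tendsto (fun t:ℝ => Real.log t * t ^ ((n:ℝ)+1)) (𝓝[>] (0:ℝ)) (𝓝 0) :=
    tendsto_log_mul_rpow_nhdsGT_zero (by positivity)
  have h3 : Tendsto (fun t:ℝ => t^(n+1)) (𝓝[>] (0:ℝ)) (𝓝 0) := by
    have := (continuous_pow (n+1)).tendsto (0:ℝ)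
    simp only [zero_pow (Nat.succ_ne_zero n)] at this
    exact this.mono_left nhdsWithin_le_nhds
  have hcomb := ((hsq.mul_const ((((n:ℝ)+1))⁻¹)).sub
      (h2.mul_const (2/((n:ℝ)+1)^2))).add (h3.mul_const (2/((n:ℝ)+1)^3))
  rw [show (0:ℝ) * (((n:ℝ)+1))⁻¹ - 0 * (2/((n:ℝ)+1)^2) + 0 * (2/((n:ℝ)+1)^3) = 0 by ring] at hcomb
  refine hcomb.congr' ?_
  filter_upwards [self_mem_nhdsWithin] with t (ht : 0 < t)
  have hA : (t ^ (((n:ℝ)+1)/2))^2 = t^(n+1) := by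
    rw [← Real.rpow_natCast (t ^ (((n:ℝ)+1)/2)) 2, ← Real.rpow_mul ht.le]
    norm_num
    rw [show ((n:ℝ)+1) = ((n+1:ℕ):ℝ) by push_cast; ring, Real.rpow_natCast]
  have hB : t ^ ((n:ℝ)+1) = t^(n+1) := by
    rw [show ((n:ℝ)+1) = ((n+1:ℕ):ℝ) by push_cast; ring, Real.rpow_natCast]
  simp only [G, mul_pow, hA, hB]
  ring

private lemma integral_pow_log_sq {a b : ℝ} (ha : 0 < a) (hab : a ≤ b) (n : ℕ) :
    ∫ t in a..b, t^n * (Real.log t)^2 = G n b - G n a := by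
  apply intervalIntegral.integral_eq_sub_of_hasDerivAt
  · intro t ht
    rw [uIcc_of_le hab] at ht
    exact hasDerivAt_G n (lt_of_lt_of_le ha ht.1)
  · apply ContinuousOn.intervalIntegrable
    refine ((continuous_pow n).continuousOn.mul ((Real.continuousOn_log.mono ?_).pow 2))
    intro t ht
    rw [uIcc_of_le hab] at ht
    exact ne_of_gt (lt_of_lt_of_le ha ht.1)

private lemma integrableOn_pow_log_sq {x : ℝ} (hx0 : 0 < x) (hx1 : x < 1) (n : ℕ) :
    IntegrableOn (fun t => t^n * (Real.log t)^2) (Ioc 0 x) := by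
  have hu0 : ∀ i : ℕ, 0 < x / ((i:ℝ)+1) := fun i => by positivity
  have hux : ∀ i : ℕ, x / ((i:ℝ)+1) ≤ x := fun i =>
    div_le_self hx0.le (by exact_mod_cast le_add_of_nonneg_left (Nat.cast_nonneg i))
  have hu : Tendsto (fun i : ℕ => x / ((i:ℝ)+1)) atTop (𝓝 0) :=
    tendsto_const_nhds.div_atTop
      (tendsto_atTop_add_const_right atTop 1 tendsto_natCast_atTop_atTop)
  apply MeasureTheory.integrableOn_Ioc_of_intervalIntegral_norm_bounded_left
    (I := G n x) (a := fun i : ℕ => x / ((i:ℝ)+1)) (l := atTop)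
  · intro i
    have hcont : ContinuousOn (fun t => t^n * (Real.log t)^2) (Icc (x/((i:ℝ)+1)) x) := by
      refine ((continuous_pow n).continuousOn.mul ((Real.continuousOn_log.mono ?_).pow 2))
      intro t ht
      exact ne_of_gt (lt_of_lt_of_le (hu0 i) ht.1)
    exact (hcont.integrableOn_Icc).mono_set Ioc_subset_Icc_self
  · exact hu
  · filter_upwards with i
    have heq : (∫ t in (x/((i:ℝ)+1))..x, ‖t^n * (Real.log t)^2‖)
        = ∫ t in (x/((i:ℝ)+1))..x, t^n * (Real.log t)^2 := by
      apply intervalIntegral.integral_congr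
      intro t ht
      rw [uIcc_of_le (hux i)] at ht
      exact norm_of_nonneg (mul_nonneg (pow_nonneg ((hu0 i).le.trans ht.1) n) (sq_nonneg _))
    rw [← intervalIntegral.integral_of_le (hux i), heq, integral_pow_log_sq (hu0 i) (hux i) n]
    have := G_nonneg n (hu0 i) ((hux i).trans hx1.le)
    linarith

private lemma setIntegral_pow_log_sq {x : ℝ} (hx0 : 0 < x) (hx1 : x < 1) (n : ℕ) :
    ∫ t in Ioo (0:ℝ) x, t^n * (Real.log t)^2 = G n x := by
  set u : ℕ → ℝ := fun i => x / ((i:ℝ)+1) with hu_def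
  have hu0 : ∀ i : ℕ, 0 < u i := fun i => by positivity
  have hux : ∀ i : ℕ, u i ≤ x := fun i =>
    div_le_self hx0.le (by exact_mod_cast le_add_of_nonneg_left (Nat.cast_nonneg i))
  have hu : Tendsto u atTop (𝓝 0) :=
    tendsto_const_nhds.div_atTop
      (tendsto_atTop_add_const_right atTop 1 tendsto_natCast_atTop_atTop)
  have hcov : AECover (volume.restrict (Ioo (0:ℝ) x)) atTop (fun i => Ioc (u i) x) :=
    MeasureTheory.aecover_Ioo_of_Ioc hu tendsto_const_nhds
  have hint : IntegrableOn (fun t => t^n * (Real.log t)^2) (Ioo (0:ℝ) x) :=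
    (integrableOn_pow_log_sq hx0 hx1 n).mono_set Ioo_subset_Ioc_self
  have h1 := hcov.integral_tendsto_of_countably_generated hint
  have h2 : ∀ i, (∫ t in Ioc (u i) x, t^n * (Real.log t)^2 ∂(volume.restrict (Ioo (0:ℝ) x)))
      = G n x - G n (u i) := by
    intro i
    rw [Measure.restrict_restrict measurableSet_Ioc]
    have hset : Ioc (u i) x ∩ Ioo (0:ℝ) x = Ioo (u i) x := by
      ext t
      simp only [mem_inter_iff, mem_Ioc, mem_Ioo]
      constructor
      · rintro ⟨⟨a1, a2⟩, b1, b2⟩; exact ⟨a1, b2⟩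
      · rintro ⟨a1, a2⟩; exact ⟨⟨a1, a2.le⟩, (hu0 i).trans a1, a2⟩
    rw [hset, ← MeasureTheory.integral_Ioc_eq_integral_Ioo,
      ← intervalIntegral.integral_of_le (hux i)]
    exact integral_pow_log_sq (hu0 i) (hux i) n
  have hu' : Tendsto u atTop (𝓝[>] (0:ℝ)) :=
    tendsto_nhdsWithin_of_tendsto_nhds_of_eventually_within _ hu
      (Eventually.of_forall fun i => hu0 i)
  have h3 : Tendsto (fun i => G n x - G n (u i)) atTop (𝓝 (G n x - 0)) :=
    tendsto_const_nhds.sub ((tendsto_G_zero n).comp hu')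
  have h1' : Tendsto (fun i => G n x - G n (u i)) atTop
      (𝓝 (∫ t in Ioo (0:ℝ) x, t^n * (Real.log t)^2)) := h1.congr h2
  have := tendsto_nhds_unique h1' h3
  linarith

private lemma odd_sum {y : ℝ} (h0 : 0 < y) (h1 : y < 1) (s : ℕ) :
    ∑' n : ℕ, (y^(n+1) - (-y)^(n+1))/((n:ℝ)+1)^s
      = 2 * ∑' k : ℕ, y^(2*k+1)/(2*(k:ℝ)+1)^s := by
  have hy : |y| < 1 := abs_lt.mpr ⟨by linarith, h1⟩
  have hy' : |(-y)| < 1 := by rwa [abs_neg]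
  set f : ℕ → ℝ := fun n => (y^(n+1) - (-y)^(n+1))/((n:ℝ)+1)^s with hf
  have hsum : Summable f := by
    refine ((summable_aux hy s).sub (summable_aux hy' s)).congr fun n => ?_
    rw [hf]; simp [sub_div]
  have he : Summable (fun k : ℕ => f (2*k)) :=
    hsum.comp_injective (fun a b h => by first | omega | (dsimp only at h; omega))
  have ho : Summable (fun k : ℕ => f (2*k+1)) :=
    hsum.comp_injective (fun a b h => by first | omega | (dsimp only at h; omega))
  rw [← tsum_even_add_odd he ho]
  have hodd : ∀ k : ℕ, f (2*k+1) = 0 := by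
    intro k
    have : (-y)^(2*k+1+1) = y^(2*k+1+1) := Even.neg_pow ⟨k+1, by ring⟩ y
    simp [hf, this]
  have heven : ∀ k : ℕ, f (2*k) = 2 * (y^(2*k+1)/(2*(k:ℝ)+1)^s) := by
    intro k
    have hop : (-y)^(2*k+1) = -(y^(2*k+1)) := Odd.neg_pow ⟨k, by ring⟩ y
    rw [hf]
    simp only [hop, sub_neg_eq_add]
    push_cast
    ring
  rw [tsum_congr hodd, tsum_zero, add_zero, tsum_congr heven, tsum_mul_left]

private lemma Li_sub {y : ℝ} (h0 : 0 < y) (h1 : y < 1) (s : ℕ) :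
    Li s y - Li s (-y) = 2 * ∑' k : ℕ, y^(2*k+1)/(2*(k:ℝ)+1)^s := by
  have hy : |y| < 1 := abs_lt.mpr ⟨by linarith, h1⟩
  have hy' : |(-y)| < 1 := by rwa [abs_neg]
  rw [Li, Li, ← Summable.tsum_sub (summable_aux hy s) (summable_aux hy' s), ← odd_sum h0 h1 s]
  exact tsum_congr fun n => (sub_div _ _ _).symm

private lemma log_ratio {y : ℝ} (h0 : 0 < y) (h1 : y < 1) :
    Real.log ((1+y)/(1-y)) = 2 * ∑' k : ℕ, y^(2*k+1)/(2*(k:ℝ)+1)^1 := by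
  have hy : |y| < 1 := abs_lt.mpr ⟨by linarith, h1⟩
  have hy' : |(-y)| < 1 := by rwa [abs_neg]
  have ha := (Real.hasSum_pow_div_log_of_abs_lt_one hy).tsum_eq
  have hb := (Real.hasSum_pow_div_log_of_abs_lt_one hy').tsum_eq
  rw [sub_neg_eq_add] at hb
  rw [Real.log_div (by linarith) (by linarith : (1:ℝ) - y ≠ 0)]
  have key : Real.log (1+y) - Real.log (1-y)
      = ∑' n : ℕ, (y^(n+1) - (-y)^(n+1))/((n:ℝ)+1)^1 := by
    have hsa : Summable (fun n : ℕ => y^(n+1)/((n:ℝ)+1)) := by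
      simpa using summable_aux hy 1
    have hsb : Summable (fun n : ℕ => (-y)^(n+1)/((n:ℝ)+1)) := by
      simpa using summable_aux hy' 1
    have : Real.log (1+y) - Real.log (1-y)
        = (∑' n : ℕ, y^(n+1)/((n:ℝ)+1)) - ∑' n : ℕ, (-y)^(n+1)/((n:ℝ)+1) := by
      rw [ha, hb]; ring
    rw [this, ← Summable.tsum_sub hsa hsb]
    exact tsum_congr fun n => by rw [pow_one, sub_div]
  rw [key, odd_sum h0 h1 1]

theorem integral_log_sq_div (x : ℝ) (hx0 : 0 < x) (hx1 : x < 1) :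
    (∫ t in Set.Ioo (0:ℝ) x, (Real.log t) ^ 2 / (1 - t ^ 2))
    = Li 3 x - Li 3 (-x) - Real.log x * (Li 2 x - Li 2 (-x))
      + (1/2) * (Real.log x) ^ 2 * Real.log ((1 + x) / (1 - x)) := by
  have hy : |x| < 1 := abs_lt.mpr ⟨by linarith, hx1⟩
  -- the three odd sums
  set T : ℕ → ℝ := fun s => ∑' k : ℕ, x^(2*k+1)/(2*(k:ℝ)+1)^s with hT
  have hA : ∀ s : ℕ, Summable (fun k : ℕ => x^(2*k+1)/(2*(k:ℝ)+1)^s) := by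
    intro s
    have hinj : Function.Injective (fun k : ℕ => 2*k) := fun a b h => by first | omega | (dsimp only at h; omega)
    have h := (summable_aux hy s).comp_injective hinj
    refine h.congr fun k => ?_
    simp only [Function.comp]
    push_cast
    ring_nf
  -- per-term values
  have hGk : ∀ k : ℕ, G (2*k) x
      = (Real.log x)^2 * (x^(2*k+1)/(2*(k:ℝ)+1)^1)
        - 2*Real.log x * (x^(2*k+1)/(2*(k:ℝ)+1)^2)
        + 2 * (x^(2*k+1)/(2*(k:ℝ)+1)^3) := by
    intro k
    simp only [G]
    push_cast
    ring
  have hval : ∀ k : ℕ, (∫ t in Ioo (0:ℝ) x, (Real.log t)^2 * (t^2)^k) = G (2*k) x := by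
    intro k
    rw [← setIntegral_pow_log_sq hx0 hx1 (2*k)]
    apply setIntegral_congr_fun measurableSet_Ioo
    intro t _
    dsimp only
    rw [← pow_mul]
    ring
  have hint : ∀ k : ℕ, IntegrableOn (fun t => (Real.log t)^2 * (t^2)^k) (Ioo (0:ℝ) x) := by
    intro k
    have := (integrableOn_pow_log_sq hx0 hx1 (2*k)).mono_set Ioo_subset_Ioc_self
    refine this.congr_fun (fun t _ => ?_) measurableSet_Ioo
    dsimp only
    rw [← pow_mul]; ring
  -- summability of integrals of norms
  have hnorm : ∀ k : ℕ, (∫ t in Ioo (0:ℝ) x, ‖(Real.log t)^2 * (t^2)^k‖) = G (2*k) x := by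
    intro k
    rw [← hval k]
    apply setIntegral_congr_fun measurableSet_Ioo
    intro t _
    dsimp only
    exact norm_of_nonneg (by positivity)
  have hsumG : Summable (fun k : ℕ => G (2*k) x) := by
    refine (((((hA 1).mul_left ((Real.log x)^2)).sub
      ((hA 2).mul_left (2*Real.log x))).add ((hA 3).mul_left 2))).congr fun k => ?_
    rw [hGk k]
  -- swap integral and sum
  have hLHS : (∫ t in Ioo (0:ℝ) x, (Real.log t)^2 / (1 - t^2))
      = ∑' k : ℕ, ∫ t in Ioo (0:ℝ) x, (Real.log t)^2 * (t^2)^k := by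
    rw [MeasureTheory.integral_tsum_of_summable_integral_norm hint
      (by simpa only [hnorm] using hsumG)]
    apply setIntegral_congr_fun measurableSet_Ioo
    intro t ht
    obtain ⟨ht0, htx⟩ := ht
    dsimp only
    have h2 : t^2 < 1 := by nlinarith
    have hg : ∑' k : ℕ, (t^2)^k = (1 - t^2)⁻¹ :=
      tsum_geometric_of_lt_one (by positivity) h2
    rw [div_eq_mul_inv, ← hg]
    exact tsum_mul_left.symm
  have hsum_eq : (∑' k : ℕ, ∫ t in Ioo (0:ℝ) x, (Real.log t)^2 * (t^2)^k)
      = (Real.log x)^2 * T 1 - 2*Real.log x * T 2 + 2 * T 3 := by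
    have hs1 : Summable (fun k : ℕ => (Real.log x)^2 * (x^(2*k+1)/(2*(k:ℝ)+1)^1)) :=
      (hA 1).mul_left _
    have hs2 : Summable (fun k : ℕ => 2*Real.log x * (x^(2*k+1)/(2*(k:ℝ)+1)^2)) :=
      (hA 2).mul_left _
    have hs3 : Summable (fun k : ℕ => 2 * (x^(2*k+1)/(2*(k:ℝ)+1)^3)) :=
      (hA 3).mul_left _
    calc (∑' k : ℕ, ∫ t in Ioo (0:ℝ) x, (Real.log t)^2 * (t^2)^k)
        = ∑' k : ℕ, ((Real.log x)^2 * (x^(2*k+1)/(2*(k:ℝ)+1)^1)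
            - 2*Real.log x * (x^(2*k+1)/(2*(k:ℝ)+1)^2)
            + 2 * (x^(2*k+1)/(2*(k:ℝ)+1)^3)) := by
          refine tsum_congr fun k => ?_
          rw [hval k, hGk k]
      _ = (Real.log x)^2 * T 1 - 2*Real.log x * T 2 + 2 * T 3 := by
          rw [Summable.tsum_add (hs1.sub hs2) hs3, Summable.tsum_sub hs1 hs2,
            tsum_mul_left, tsum_mul_left, tsum_mul_left]
  rw [hLHS, hsum_eq, Li_sub hx0 hx1 3, Li_sub hx0 hx1 2, log_ratio hx0 hx1]
  rw [hT]
  ring
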